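/- Let 𝒩 be a nonempty set, k a field of characteristic 0, K = k((ε)), and φ : 𝒩 → k a function extended additively to words. Define the K-valued mould T by T^∅ = 1 and T^{n₁⋯n_r}(ε) = 1/((φ(n₁)+ε)(φ(n₁)+φ(n₂)+2ε)⋯(φ(n₁)+⋯+φ(n_r)+rε)). Then T is symmetral and satisfies ∇_Φ T = T × I_K, where (∇_Φ M)^{n̲}(ε) = (φ(n̲) + r(n̲)ε) M^{n̲}(ε) and I_K^{n̲} = 1 if r(n̲) = 1 and 0 otherwise. -/

import Mathlib

open scoped Classical

/-- Shuffle coefficient: the number of ways the word `n` can be obtained by interleaving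
the letters of `a` and `b` while preserving their internal orders. -/
noncomputable def sh {𝒩 : Type*} : List 𝒩 → List 𝒩 → List 𝒩 → ℕ
  | [], b, n => if b = n then 1 else 0
  | a, [], n => if a = n then 1 else 0
  | _ :: _, _ :: _, [] => 0
  | x :: a, y :: b, z :: n =>
      (if x = z then sh a (y :: b) n else 0) + (if y = z then sh (x :: a) b n else 0)

/-- Mould multiplication: `(M × N)^n = ∑_{n = a b} M^a N^b`. -/
noncomputable def mmul {𝒩 A : Type*} [Semiring A] (M N : List 𝒩 → A) : List 𝒩 → A :=
  fun n => ∑ i ∈ Finset.range (n.length + 1), M (n.take i) * N (n.drop i)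

/-- A mould `M` is symmetral if `M^∅ = 1` and
`∑_n sh^{a,b}_n M^n = M^a M^b` for all nonempty words `a`, `b`. -/
def Symmetral {𝒩 A : Type*} [CommSemiring A] (M : List 𝒩 → A) : Prop :=
  M [] = 1 ∧ ∀ a b : List 𝒩, a ≠ [] → b ≠ [] →
    (∑ᶠ n : List 𝒩, (sh a b n : A) * M n) = M a * M b

/-- Additive extension of `φ : 𝒩 → k` to words: `φ(n₁⋯n_r) = φ(n₁) + ⋯ + φ(n_r)`. -/
def phiw {𝒩 k : Type*} [AddCommMonoid k] (φ : 𝒩 → k) (l : List 𝒩) : k :=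
  (l.map φ).sum

/-- The mould `I`: value `1` on words of length `1`, and `0` otherwise. -/
noncomputable def Imould {𝒩 A : Type*} [Semiring A] : List 𝒩 → A :=
  fun n => if n.length = 1 then 1 else 0


/-- The indeterminate `ε` of `K = k((ε))`. -/
noncomputable def eps (k : Type*) [Field k] : LaurentSeries k :=
  HahnSeries.single (1 : ℤ) (1 : k)

/-- The mould `T`: `T^∅ = 1` and
`T^{n₁⋯n_r}(ε) = 1/((φ(n₁)+ε)(φ(n₁)+φ(n₂)+2ε)⋯(φ(n₁)+⋯+φ(n_r)+rε))`. -/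
noncomputable def Tdef {𝒩 k : Type*} [Field k] (φ : 𝒩 → k) (l : List 𝒩) :
    LaurentSeries k :=
  (∏ i ∈ Finset.range l.length,
      ((HahnSeries.C (phiw φ (l.take (i + 1))) : LaurentSeries k) + (i + 1 : ℕ) • eps k))⁻¹

set_option linter.unusedSectionVars false

section shlem
variable {𝒩 : Type*}

lemma sh_nil_left (b n : List 𝒩) : sh ([] : List 𝒩) b n = if b = n then 1 else 0 := by
  cases b <;> cases n <;> simp [sh]

lemma sh_nil_right (a n : List 𝒩) : sh a ([] : List 𝒩) n = if a = n then 1 else 0 := by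
  cases a <;> cases n <;> simp [sh]

lemma sh_cons_cons_nil (x y : 𝒩) (a b : List 𝒩) : sh (x :: a) (y :: b) ([] : List 𝒩) = 0 := by
  simp [sh]

lemma sh_cons (x y z : 𝒩) (a b n : List 𝒩) :
    sh (x :: a) (y :: b) (z :: n) =
      (if x = z then sh a (y :: b) n else 0) + (if y = z then sh (x :: a) b n else 0) := by
  simp [sh]

lemma sh_to_nil {a b : List 𝒩} (hb : b ≠ []) : sh a b ([] : List 𝒩) = 0 := by
  cases a <;> cases b <;> simp_all [sh]

lemma sh_to_nil' {a b : List 𝒩} (ha : a ≠ []) : sh a b ([] : List 𝒩) = 0 := by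
  cases a <;> cases b <;> simp_all [sh]

lemma sh_nil3₁ (a b : List 𝒩) (x : 𝒩) : sh (a ++ [x]) b ([] : List 𝒩) = 0 :=
  sh_to_nil' (by simp)

lemma sh_nil3₂ (a b : List 𝒩) (y : 𝒩) : sh a (b ++ [y]) ([] : List 𝒩) = 0 :=
  sh_to_nil (by simp)

private lemma concat_eq_concat_iff {l₁ l₂ : List 𝒩} {u v : 𝒩} :
    l₁ ++ [u] = l₂ ++ [v] ↔ l₁ = l₂ ∧ u = v := by
  constructor
  · intro h
    have hd := congrArg List.dropLast h
    rw [List.dropLast_concat, List.dropLast_concat] at hd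
    have hg := congrArg (fun l => List.getLastD l u) h
    simp only [List.getLastD_concat] at hg
    exact ⟨hd, hg⟩
  · rintro ⟨rfl, rfl⟩; rfl

lemma sh_concat (x y z : 𝒩) (a b m : List 𝒩) :
    sh (a ++ [x]) (b ++ [y]) (m ++ [z]) =
      (if x = z then sh a (b ++ [y]) m else 0) + (if y = z then sh (a ++ [x]) b m else 0) := by
  induction m generalizing a b with
  | nil =>
    cases a <;> cases b <;>
      simp [sh_cons, sh_nil_left, sh_nil_right, sh_cons_cons_nil, sh_nil3₁, sh_nil3₂]
  | cons m0 m' ih =>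
    cases a with
    | nil =>
      cases b with
      | nil =>
        cases m' with
        | nil =>
          simp only [List.nil_append, List.cons_append, List.singleton_append, sh_cons,
            sh_nil_left, sh_nil_right, List.cons.injEq, and_true, List.nil_eq]
          try simp only [ite_and]
          split_ifs <;> omega
        | cons c cs =>
          simp [sh_cons, sh_nil_left, sh_nil_right, List.cons.injEq]
      | cons b0 b' =>
        have ihb := ih ([] : List 𝒩) b'
        simp only [List.nil_append] at ihb
        have hconc : (b0 :: (b' ++ [y]) = m' ++ [z]) ↔ (b0 :: b' = m' ∧ y = z) := by
          rw [show b0 :: (b' ++ [y]) = (b0 :: b') ++ [y] from rfl, concat_eq_concat_iff]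
        simp only [List.nil_append, List.cons_append, sh_cons, sh_nil_left, ihb]
        simp only [hconc, List.cons.injEq, ite_and]
        split_ifs <;> omega
    | cons a0 a' =>
      cases b with
      | nil =>
        have iha := ih a' ([] : List 𝒩)
        simp only [List.nil_append] at iha
        have hconc : (a0 :: (a' ++ [x]) = m' ++ [z]) ↔ (a0 :: a' = m' ∧ x = z) := by
          rw [show a0 :: (a' ++ [x]) = (a0 :: a') ++ [x] from rfl, concat_eq_concat_iff]
        simp only [List.nil_append, List.cons_append, sh_cons, sh_nil_right, iha]
        simp only [hconc, List.cons.injEq, ite_and]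
        split_ifs <;> omega
      | cons b0 b' =>
        have ih1 := ih a' (b0 :: b')
        have ih2 := ih (a0 :: a') b'
        simp only [List.cons_append] at ih1 ih2
        simp only [List.cons_append, sh_cons, ih1, ih2]
        split_ifs <;> omega

lemma sh_perm : ∀ {n a b : List 𝒩}, sh a b n ≠ 0 → n.Perm (a ++ b) := by
  intro n
  induction n with
  | nil =>
    intro a b h
    cases a with
    | nil =>
      rw [sh_nil_left] at h
      split_ifs at h with hb
      · subst hb; simp
      · exact absurd rfl h
    | cons a0 a' =>
      cases b with
      | nil =>
        rw [sh_nil_right] at h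
        split_ifs at h with ha <;> simp_all
      | cons b0 b' => rw [sh_cons_cons_nil] at h; simp at h
  | cons z n' ih =>
    intro a b h
    cases a with
    | nil =>
      rw [sh_nil_left] at h
      split_ifs at h with hb
      · subst hb; simp
      · exact absurd rfl h
    | cons a0 a' =>
      cases b with
      | nil =>
        rw [sh_nil_right] at h
        split_ifs at h with ha
        · rw [List.append_nil, ← ha]
        · exact absurd rfl h
      | cons b0 b' =>
        rw [sh_cons] at h
        split_ifs at h with h1 h2 h2
        · rcases (by omega : sh a' (b0 :: b') n' ≠ 0 ∨ sh (a0 :: a') b' n' ≠ 0) with hs | hs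
          · rw [h1]; simpa using (ih hs).cons z
          · rw [h2]; exact ((ih hs).cons z).trans List.perm_middle.symm
        · rw [add_zero] at h
          rw [h1]; simpa using (ih h).cons z
        · rw [zero_add] at h
          rw [h2]; exact ((ih h).cons z).trans List.perm_middle.symm
        · simp at h

end shlem

section laurent
variable {𝒩 k : Type*} [Field k] [CharZero k] (φ : 𝒩 → k)

lemma phiw_append (a b : List 𝒩) : phiw φ (a ++ b) = phiw φ a + phiw φ b := by
  simp [phiw]

lemma phiw_perm {a b : List 𝒩} (h : a.Perm b) : phiw φ a = phiw φ b :=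
  (h.map φ).sum_eq

lemma nsmul_eps (n : ℕ) : (n • eps k : LaurentSeries k) = HahnSeries.single (1 : ℤ) (n : k) := by
  rw [nsmul_eq_mul,
    show ((n : LaurentSeries k)) = HahnSeries.C ((n : k)) from (map_natCast HahnSeries.C n).symm,
    HahnSeries.C_apply, eps, HahnSeries.single_mul_single, zero_add, mul_one]

lemma D_ne_zero {l : List 𝒩} (hl : l ≠ []) :
    ((HahnSeries.C (phiw φ l) : LaurentSeries k) + l.length • eps k) ≠ 0 := by
  intro h
  have h1 := congrArg (fun x : LaurentSeries k => x.coeff 1) h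
  rw [nsmul_eps] at h1
  simp only [HahnSeries.coeff_add, HahnSeries.C_apply,
    HahnSeries.coeff_single_of_ne (by norm_num : (1 : ℤ) ≠ 0),
    HahnSeries.coeff_single_same, zero_add, HahnSeries.coeff_zero] at h1
  have : l.length = 0 := Nat.cast_eq_zero.mp h1
  simp [List.length_eq_zero_iff] at this
  exact hl this
end laurent

section tdef
variable {𝒩 k : Type*} [Field k] [CharZero k] (φ : 𝒩 → k)

lemma Tdef_nil : Tdef φ ([] : List 𝒩) = 1 := by
  simp [Tdef]

lemma Tdef_concat (m : List 𝒩) (x : 𝒩) :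
    Tdef φ (m ++ [x]) =
      Tdef φ m *
        ((HahnSeries.C (phiw φ (m ++ [x])) : LaurentSeries k) + (m ++ [x]).length • eps k)⁻¹ := by
  unfold Tdef
  have hlen : (m ++ [x]).length = m.length + 1 := by simp
  have htake : ∀ i ∈ Finset.range m.length, (m ++ [x]).take (i + 1) = m.take (i + 1) := by
    intro i hi
    rw [Finset.mem_range] at hi
    rw [List.take_append, show i + 1 - m.length = 0 by omega, List.take_zero,
      List.append_nil]
  have hprod :
      (∏ i ∈ Finset.range m.length,
          ((HahnSeries.C (phiw φ ((m ++ [x]).take (i + 1))) : LaurentSeries k)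
            + (i + 1 : ℕ) • eps k)) =
        ∏ i ∈ Finset.range m.length,
          ((HahnSeries.C (phiw φ (m.take (i + 1))) : LaurentSeries k) + (i + 1 : ℕ) • eps k) :=
    Finset.prod_congr rfl (fun i hi => by rw [htake i hi])
  rw [hlen, Finset.prod_range_succ, mul_inv, hprod,
    show (m ++ [x]).take (m.length + 1) = m ++ [x] by rw [← hlen, List.take_length]]
end tdef

section main
variable {𝒩 k : Type*} [Nonempty 𝒩] [Field k] [CharZero k] (φ : 𝒩 → k)

lemma Tsupport_subset (a b : List 𝒩) :
    Function.support (fun n => (sh a b n : LaurentSeries k) * Tdef φ n) ⊆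
      ↑((a ++ b).permutations.toFinset) := by
  intro n hn
  simp only [Function.mem_support] at hn
  have hsh : sh a b n ≠ 0 := by
    intro h0; apply hn; rw [h0]; simp
  simp only [Finset.coe_sort_coe, List.coe_toFinset, Set.mem_setOf_eq, List.mem_permutations]
  exact sh_perm hsh

lemma Tsupport_finite (a b : List 𝒩) :
    (Function.support (fun n => (sh a b n : LaurentSeries k) * Tdef φ n)).Finite :=
  Set.Finite.subset (Finset.finite_toSet _) (Tsupport_subset φ a b)

lemma Qnil_left (b : List 𝒩) :
    (∑ᶠ n : List 𝒩, (sh ([] : List 𝒩) b n : LaurentSeries k) * Tdef φ n) = Tdef φ b := by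
  rw [finsum_eq_single _ b (fun m hm => by rw [sh_nil_left]; simp [Ne.symm hm])]
  rw [sh_nil_left]; simp

lemma Qnil_right (a : List 𝒩) :
    (∑ᶠ n : List 𝒩, (sh a ([] : List 𝒩) n : LaurentSeries k) * Tdef φ n) = Tdef φ a := by
  rw [finsum_eq_single _ a (fun m hm => by rw [sh_nil_right]; simp [Ne.symm hm])]
  rw [sh_nil_right]; simp

noncomputable def auxF (d x : 𝒩) (a b : List 𝒩) : List 𝒩 → LaurentSeries k := fun n =>
  (if x = n.getLastD d then (sh a b n.dropLast : LaurentSeries k) else 0) * Tdef φ n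

lemma dropLast_append_getLastD {l : List 𝒩} (h : l ≠ []) (d : 𝒩) :
    l.dropLast ++ [l.getLastD d] = l := by
  rcases List.eq_nil_or_concat l with rfl | ⟨m, u, rfl⟩
  · exact absurd rfl h
  · rw [List.concat_eq_append, List.dropLast_concat, List.getLastD_concat]

lemma auxF_support (d x : 𝒩) (a b : List 𝒩) (h0 : sh a b [] = 0) :
    Function.support (auxF φ d x a b) ⊆
      ↑(((a ++ b).permutations.toFinset).image (fun l => l ++ [x])) := by
  intro n hn
  simp only [Function.mem_support, auxF] at hn
  have hne : (if x = n.getLastD d then (sh a b n.dropLast : LaurentSeries k) else 0) ≠ 0 :=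
    fun h => hn (by rw [h, zero_mul])
  by_cases hx : x = n.getLastD d
  · rw [if_pos hx] at hne
    have hsh : sh a b n.dropLast ≠ 0 := by
      intro hz; apply hne; rw [hz]; simp
    have hnnil : n ≠ [] := by
      rintro rfl
      simp only [List.dropLast_nil] at hsh
      exact hsh h0
    have hperm := sh_perm hsh
    simp only [Finset.coe_image, List.coe_toFinset, Set.mem_image, Set.mem_setOf_eq,
      List.mem_permutations]
    refine ⟨n.dropLast, hperm, ?_⟩
    rw [hx]
    exact dropLast_append_getLastD hnnil d
  · rw [if_neg hx] at hne
    exact absurd rfl hne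

lemma pointwise_decomp (d x y : 𝒩) (a b : List 𝒩) (n : List 𝒩) :
    (sh (a ++ [x]) (b ++ [y]) n : LaurentSeries k) * Tdef φ n =
      auxF φ d x a (b ++ [y]) n + auxF φ d y (a ++ [x]) b n := by
  rcases List.eq_nil_or_concat n with rfl | ⟨m, z, rfl⟩
  · simp [auxF, sh_nil3₁, sh_nil3₂]
  · rw [List.concat_eq_append, sh_concat]
    simp only [auxF, List.getLastD_concat, List.dropLast_concat]
    push_cast
    ring

lemma auxF_sum_finite (d x : 𝒩) (a b : List 𝒩) (h0 : sh a b [] = 0) :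
    (Function.support (auxF φ d x a b)).Finite :=
  Set.Finite.subset (Finset.finite_toSet _) (auxF_support φ d x a b h0)

lemma auxF_sum (d x : 𝒩) (a b : List 𝒩) (h0 : sh a b [] = 0) :
    ∑ᶠ n : List 𝒩, auxF φ d x a b n =
      (∑ᶠ m : List 𝒩, (sh a b m : LaurentSeries k) * Tdef φ m) *
        ((HahnSeries.C (phiw φ ((a ++ b) ++ [x])) : LaurentSeries k)
          + ((a ++ b) ++ [x]).length • eps k)⁻¹ := by
  rw [finsum_eq_sum_of_support_subset _ (auxF_support φ d x a b h0)]
  rw [Finset.sum_image (fun m _ m' _ h => List.append_left_injective [x] h)]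
  have hcong : ∀ m ∈ (a ++ b).permutations.toFinset,
      auxF φ d x a b (m ++ [x]) =
        ((sh a b m : LaurentSeries k) * Tdef φ m) *
          ((HahnSeries.C (phiw φ ((a ++ b) ++ [x])) : LaurentSeries k)
            + ((a ++ b) ++ [x]).length • eps k)⁻¹ := by
    intro m hm
    have hperm : m.Perm (a ++ b) := by
      rw [List.mem_toFinset, List.mem_permutations] at hm; exact hm
    have hphi : phiw φ (m ++ [x]) = phiw φ ((a ++ b) ++ [x]) := by
      rw [phiw_append, phiw_append, phiw_perm φ hperm]
    have hlen : (m ++ [x]).length = ((a ++ b) ++ [x]).length := by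
      simp [hperm.length_eq]
      omega
    simp only [auxF, List.getLastD_concat, List.dropLast_concat, eq_self_iff_true, if_true]
    rw [Tdef_concat, hphi, hlen]
    ring
  rw [Finset.sum_congr rfl hcong, ← Finset.sum_mul]
  congr 1
  rw [← finsum_eq_sum_of_support_subset _ (Tsupport_subset φ a b)]

lemma Qsum (N : ℕ) : ∀ a b : List 𝒩, a.length + b.length ≤ N →
    (∑ᶠ n : List 𝒩, (sh a b n : LaurentSeries k) * Tdef φ n) = Tdef φ a * Tdef φ b := by
  induction N with
  | zero =>
    intro a b hab
    have ha : a = [] := by cases a <;> simp_all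
    subst ha
    rw [Qnil_left, Tdef_nil, one_mul]
  | succ N ih =>
    intro a b hab
    rcases List.eq_nil_or_concat a with rfl | ⟨a', x, rfl⟩
    · rw [Qnil_left, Tdef_nil, one_mul]
    rcases List.eq_nil_or_concat b with rfl | ⟨b', y, rfl⟩
    · rw [Qnil_right, Tdef_nil, mul_one]
    simp only [List.concat_eq_append] at hab ⊢
    set d : 𝒩 := Classical.arbitrary 𝒩 with hd
    have h0f : sh a' (b' ++ [y]) ([] : List 𝒩) = 0 := sh_nil3₂ _ _ _
    have h0g : sh (a' ++ [x]) b' ([] : List 𝒩) = 0 := sh_nil3₁ _ _ _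
    have hsplit : (∑ᶠ n : List 𝒩, (sh (a' ++ [x]) (b' ++ [y]) n : LaurentSeries k) * Tdef φ n)
        = (∑ᶠ n : List 𝒩, auxF φ d x a' (b' ++ [y]) n)
          + ∑ᶠ n : List 𝒩, auxF φ d y (a' ++ [x]) b' n := by
      rw [← finsum_add_distrib (auxF_sum_finite φ d x a' (b' ++ [y]) h0f)
        (auxF_sum_finite φ d y (a' ++ [x]) b' h0g)]
      exact finsum_congr (pointwise_decomp φ d x y a' b')
    have hlenab : a'.length + (b' ++ [y]).length ≤ N := by
      simp only [List.length_append, List.length_singleton] at hab ⊢; omega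
    have hlenab' : (a' ++ [x]).length + b'.length ≤ N := by
      simp only [List.length_append, List.length_singleton] at hab ⊢; omega
    have hA := auxF_sum φ d x a' (b' ++ [y]) h0f
    have hB := auxF_sum φ d y (a' ++ [x]) b' h0g
    rw [ih a' (b' ++ [y]) hlenab] at hA
    rw [ih (a' ++ [x]) b' hlenab'] at hB
    -- common denominator
    set Dab : LaurentSeries k :=
      (HahnSeries.C (phiw φ ((a' ++ [x]) ++ (b' ++ [y]))) : LaurentSeries k)
        + ((a' ++ [x]) ++ (b' ++ [y])).length • eps k with hDab
    have ef : ((HahnSeries.C (phiw φ ((a' ++ (b' ++ [y])) ++ [x])) : LaurentSeries k)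
        + ((a' ++ (b' ++ [y])) ++ [x]).length • eps k) = Dab := by
      rw [hDab]
      have h1 : phiw φ ((a' ++ (b' ++ [y])) ++ [x])
          = phiw φ ((a' ++ [x]) ++ (b' ++ [y])) := by
        simp only [phiw_append]; ring
      have h2 : ((a' ++ (b' ++ [y])) ++ [x]).length
          = ((a' ++ [x]) ++ (b' ++ [y])).length := by
        simp only [List.length_append, List.length_singleton]; omega
      rw [h1, h2]
    have eg : ((HahnSeries.C (phiw φ (((a' ++ [x]) ++ b') ++ [y])) : LaurentSeries k)
        + (((a' ++ [x]) ++ b') ++ [y]).length • eps k) = Dab := by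
      rw [hDab]
      have h1 : phiw φ (((a' ++ [x]) ++ b') ++ [y])
          = phiw φ ((a' ++ [x]) ++ (b' ++ [y])) := by
        simp only [phiw_append]; ring
      have h2 : (((a' ++ [x]) ++ b') ++ [y]).length
          = ((a' ++ [x]) ++ (b' ++ [y])).length := by
        simp only [List.length_append, List.length_singleton]; omega
      rw [h1, h2]
    rw [ef] at hA
    rw [eg] at hB
    rw [hsplit, hA, hB]
    -- algebra
    set Da : LaurentSeries k :=
      (HahnSeries.C (phiw φ (a' ++ [x])) : LaurentSeries k) + (a' ++ [x]).length • eps k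
      with hDa
    set Db : LaurentSeries k :=
      (HahnSeries.C (phiw φ (b' ++ [y])) : LaurentSeries k) + (b' ++ [y]).length • eps k
      with hDb
    have hTa : Tdef φ a' = Tdef φ (a' ++ [x]) * Da := by
      rw [Tdef_concat, mul_assoc, ← hDa,
        inv_mul_cancel₀ (by rw [hDa]; exact D_ne_zero φ (by simp)), mul_one]
    have hTb : Tdef φ b' = Tdef φ (b' ++ [y]) * Db := by
      rw [Tdef_concat, mul_assoc, ← hDb,
        inv_mul_cancel₀ (by rw [hDb]; exact D_ne_zero φ (by simp)), mul_one]
    have hDD : Da + Db = Dab := by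
      rw [hDa, hDb, hDab, phiw_append φ (a' ++ [x]) (b' ++ [y]), map_add,
        show ((a' ++ [x]) ++ (b' ++ [y])).length = (a' ++ [x]).length + (b' ++ [y]).length from
          List.length_append,
        add_nsmul]
      abel
    have hDabne : Dab ≠ 0 := by
      rw [hDab]; exact D_ne_zero φ (by simp)
    rw [hTa, hTb]
    have : Tdef φ (a' ++ [x]) * Da * Tdef φ (b' ++ [y]) * Dab⁻¹
        + Tdef φ (a' ++ [x]) * (Tdef φ (b' ++ [y]) * Db) * Dab⁻¹
        = Tdef φ (a' ++ [x]) * Tdef φ (b' ++ [y]) * ((Da + Db) * Dab⁻¹) := by ring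
    rw [this, hDD, mul_inv_cancel₀ hDabne, mul_one]

end main


/-- the mould `T` is symmetral and satisfies `∇_Φ T = T × I`,
where `(∇_Φ M)^n = (φ(n) + r(n) ε) M^n`. -/
theorem T_symmetral_and_nablaPhi
    {𝒩 k : Type*} [Nonempty 𝒩] [Field k] [CharZero k] (φ : 𝒩 → k) :
    Symmetral (Tdef φ) ∧
    (fun l : List 𝒩 =>
        ((HahnSeries.C (phiw φ l) : LaurentSeries k) + l.length • eps k) * Tdef φ l) =
      mmul (Tdef φ) Imould := by
  constructor
  · exact ⟨Tdef_nil φ, fun a b _ _ => Qsum φ (a.length + b.length) a b le_rfl⟩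
  · funext l
    rcases List.eq_nil_or_concat l with rfl | ⟨m, z, rfl⟩
    · simp [mmul, Imould, phiw, Tdef]
    rw [List.concat_eq_append]
    have hR : mmul (Tdef φ) Imould (m ++ [z]) = Tdef φ m := by
      unfold mmul Imould
      rw [Finset.sum_eq_single m.length]
      · rw [List.take_left' rfl, List.drop_left' rfl, List.length_singleton, if_pos rfl, mul_one]
      · intro i hi hne
        rw [Finset.mem_range, List.length_append, List.length_singleton] at hi
        rw [if_neg (by rw [List.length_drop, List.length_append, List.length_singleton]; omega),
          mul_zero]
      · intro habs
        exact absurd (by rw [Finset.mem_range, List.length_append]; omega) habs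
    rw [hR, Tdef_concat φ m z]
    rw [show ((HahnSeries.C (phiw φ (m ++ [z])) : LaurentSeries k) + (m ++ [z]).length • eps k)
          * (Tdef φ m *
            ((HahnSeries.C (phiw φ (m ++ [z])) : LaurentSeries k)
              + (m ++ [z]).length • eps k)⁻¹)
        = Tdef φ m *
            (((HahnSeries.C (phiw φ (m ++ [z])) : LaurentSeries k)
              + (m ++ [z]).length • eps k)⁻¹ *
             ((HahnSeries.C (phiw φ (m ++ [z])) : LaurentSeries k)
              + (m ++ [z]).length • eps k)) by ring,
      inv_mul_cancel₀ (D_ne_zero φ (by simp)), mul_one]
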